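/- Let ω = (ω₀, …, ω_{n+1}) be a primitive algebraic key sequence and θ ∈ (ℂ*)ⁿ. In Â := ℂ[ŵ, ŷ₁, …, ŷ_{n+1}], let Î be the ideal generated by Ĝ₁, …, Ĝ_n, where Ĝ_k := ŵ^{α_k·ω_k − ω_{k+1}}·ŷ_{k+1} − ( ŷ_k^{α_k} − θ_k·∏_{j=1}^{k−1} ŷ_j^{β_{k,j}} ). Then the image of ŵ in Â/Î is a nonzerodivisor; equivalently, for every ĝ ∈ Â and every N ≥ 0, if ŵ^N·ĝ ∈ Î then ĝ ∈ Î. -/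

import Mathlib

/-- `dks ω k` is `gcd(|ω₀|, …, |ω_k|)`. -/
def dks (ω : ℕ → ℤ) (k : ℕ) : ℕ :=
  (Finset.range (k + 1)).gcd fun j => (ω j).natAbs

/-- `alphaK ω k` is `α_k = d_{k−1}/d_k`. -/
def alphaK (ω : ℕ → ℤ) (k : ℕ) : ℕ := dks ω (k - 1) / dks ω k

/-- A key sequence `(ω₀, …, ω_{n+1})`. -/
def IsKeySequence (n : ℕ) (ω : ℕ → ℤ) : Prop :=
  1 ≤ ω 0 ∧ dks ω (n + 1) = 1 ∧
    ∀ k, 1 ≤ k → k ≤ n → ω (k + 1) < (alphaK ω k : ℤ) * ω k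

/-- A key sequence is primitive iff `ω_{n+1} > 0`. -/
def IsPrimitive (n : ℕ) (ω : ℕ → ℤ) : Prop := 0 < ω (n + 1)

/-- `β k` is, for `1 ≤ k ≤ n`, the unique representation tuple of `α_k·ω_k`. -/
def IsRepTuple (n : ℕ) (ω : ℕ → ℤ) (β : ℕ → ℕ → ℤ) : Prop :=
  ∀ k, 1 ≤ k → k ≤ n →
    (∀ j, 1 ≤ j → j < k → 0 ≤ β k j ∧ β k j < (alphaK ω j : ℤ)) ∧
      (alphaK ω k : ℤ) * ω k = ∑ j ∈ Finset.range k, β k j * ω j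

open Fin.NatCast in
/-- The polynomial `Ĝ_k = ŵ^{α_k·ω_k − ω_{k+1}}·ŷ_{k+1} − (ŷ_k^{α_k} − θ_k·∏_{j=1}^{k−1} ŷ_j^{β_{k,j}})`
in `Â = ℂ[ŵ, ŷ₁, …, ŷ_{n+1}]`, where `ŵ` is the variable of index `0` and `ŷ_j` the
variable of index `j`. -/
noncomputable def Ghat (n : ℕ) (ω : ℕ → ℤ) (θ : ℕ → ℂ) (β : ℕ → ℕ → ℤ) (k : ℕ) :
    MvPolynomial (Fin (n + 2)) ℂ :=
  MvPolynomial.X (0 : Fin (n + 2)) ^ (((alphaK ω k : ℤ) * ω k - ω (k + 1)).toNat) *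
      MvPolynomial.X ((k + 1 : ℕ) : Fin (n + 2)) -
    (MvPolynomial.X ((k : ℕ) : Fin (n + 2)) ^ alphaK ω k -
      MvPolynomial.C (θ k) *
        ∏ j ∈ Finset.Ico 1 k, MvPolynomial.X ((j : ℕ) : Fin (n + 2)) ^ (β k j).toNat)

/-- The ideal `Î = (Ĝ₁, …, Ĝ_n) ⊆ Â`. -/
noncomputable def Ihat (n : ℕ) (ω : ℕ → ℤ) (θ : ℕ → ℂ) (β : ℕ → ℕ → ℤ) :
    Ideal (MvPolynomial (Fin (n + 2)) ℂ) :=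
  Ideal.span (Ghat n ω θ β '' Set.Icc 1 n)


/-- The algebraicity condition: `α_k·ω_k ∈ ℤ_{≥0}⟨ω₀, …, ω_{k−1}⟩` for `1 ≤ k ≤ n`. -/
def IsAlgebraicKeySeq (n : ℕ) (ω : ℕ → ℤ) : Prop :=
  ∀ k, 1 ≤ k → k ≤ n → ∃ c : ℕ → ℕ,
    (alphaK ω k : ℤ) * ω k = ∑ j ∈ Finset.range k, (c j : ℤ) * ω j

namespace Stmt6Aux

open MvPolynomial
open Fin.NatCast

lemma finCast_ne {n a b : ℕ} (ha : a < n + 2) (hb : b < n + 2) (h : a ≠ b) :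
    (a : Fin (n + 2)) ≠ (b : Fin (n + 2)) := by
  intro H
  apply h
  have := congrArg Fin.val H
  simpa [Fin.val_natCast, Nat.mod_eq_of_lt ha, Nat.mod_eq_of_lt hb] using this

lemma dks_pos {ω : ℕ → ℤ} (h : 1 ≤ ω 0) (k : ℕ) : 0 < dks ω k := by
  rcases Nat.eq_zero_or_pos (dks ω k) with h0 | h0
  · exfalso
    have := (Finset.gcd_eq_zero_iff.mp h0) 0 (Finset.mem_range.mpr (Nat.succ_pos k))
    omega
  · exact h0

lemma dks_dvd {ω : ℕ → ℤ} (k : ℕ) : dks ω k ∣ dks ω (k - 1) := by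
  apply Finset.dvd_gcd
  intro j hj
  apply Finset.gcd_dvd
  simp only [Finset.mem_range] at hj ⊢
  omega

lemma alpha_pos {ω : ℕ → ℤ} (h : 1 ≤ ω 0) (k : ℕ) : 0 < alphaK ω k :=
  Nat.div_pos (Nat.le_of_dvd (dks_pos h _) (dks_dvd k)) (dks_pos h k)

/-- `F_k = X_k^{α_k} - θ_k ∏ X_j^{β_{k,j}}`, the part of `Ĝ_k` not involving `ŵ`. -/
noncomputable def Fp (n : ℕ) (ω : ℕ → ℤ) (θ : ℕ → ℂ) (β : ℕ → ℕ → ℤ) (k : ℕ) :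
    MvPolynomial (Fin (n + 2)) ℂ :=
  MvPolynomial.X ((k : ℕ) : Fin (n + 2)) ^ alphaK ω k -
    MvPolynomial.C (θ k) *
      ∏ j ∈ Finset.Ico 1 k, MvPolynomial.X ((j : ℕ) : Fin (n + 2)) ^ (β k j).toNat

lemma Ghat_eq (n : ℕ) (ω : ℕ → ℤ) (θ : ℕ → ℂ) (β : ℕ → ℕ → ℤ) (k : ℕ) :
    Ghat n ω θ β k =
      MvPolynomial.X (0 : Fin (n + 2)) ^ (((alphaK ω k : ℤ) * ω k - ω (k + 1)).toNat) *
        MvPolynomial.X ((k + 1 : ℕ) : Fin (n + 2)) - Fp n ω θ β k := rfl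

/-- The substitution `ŵ := 0`. -/
noncomputable def sg (n : ℕ) :
    MvPolynomial (Fin (n + 2)) ℂ →ₐ[ℂ] MvPolynomial (Fin (n + 2)) ℂ :=
  aeval (fun i => if i = 0 then 0 else X i)

lemma sg_X0 (n : ℕ) : sg n (X 0) = 0 := by simp [sg]

lemma sg_X_ne (n : ℕ) {i : Fin (n + 2)} (h : i ≠ 0) : sg n (X i) = X i := by
  simp [sg, h]

lemma sg_C (n : ℕ) (a : ℂ) : sg n (C a) = C a := by
  simp [sg, algebraMap_eq]

lemma X0_dvd_sub_sg (n : ℕ) (p : MvPolynomial (Fin (n + 2)) ℂ) :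
    (X 0 : MvPolynomial (Fin (n + 2)) ℂ) ∣ p - sg n p := by
  induction p using MvPolynomial.induction_on with
  | C a => simp [sg_C]
  | add p q hp hq =>
      have := dvd_add hp hq
      rw [map_add]
      convert this using 1
      ring
  | mul_X p i hp =>
      rw [map_mul]
      by_cases hi : i = 0
      · subst hi
        rw [sg_X0, mul_zero, sub_zero]
        exact Dvd.intro_left p rfl
      · rw [sg_X_ne n hi]
        have : p * X i - sg n p * X i = (p - sg n p) * X i := by ring
        rw [this]
        exact hp.mul_right _

lemma sg_F (n : ℕ) (ω : ℕ → ℤ) (θ : ℕ → ℂ) (β : ℕ → ℕ → ℤ) {k : ℕ}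
    (hk1 : 1 ≤ k) (hk2 : k ≤ n + 1) :
    sg n (Fp n ω θ β k) = Fp n ω θ β k := by
  have hkne : ((k : ℕ) : Fin (n + 2)) ≠ 0 := by
    have h0 : ((0 : ℕ) : Fin (n + 2)) = 0 := by simp
    rw [← h0]
    exact finCast_ne (by omega) (by omega) (by omega)
  rw [Fp, map_sub, map_pow, sg_X_ne n hkne, map_mul, sg_C, map_prod]
  congr 1
  congr 1
  apply Finset.prod_congr rfl
  intro j hj
  simp only [Finset.mem_Ico] at hj
  have hjne : ((j : ℕ) : Fin (n + 2)) ≠ 0 := by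
    have h0 : ((0 : ℕ) : Fin (n + 2)) = 0 := by simp
    rw [← h0]
    exact finCast_ne (by omega) (by omega) (by omega)
  rw [map_pow, sg_X_ne n hjne]

lemma sg_G (n : ℕ) (ω : ℕ → ℤ) (θ : ℕ → ℂ) (β : ℕ → ℕ → ℤ) {k : ℕ}
    (hk1 : 1 ≤ k) (hk2 : k ≤ n)
    (he : ω (k + 1) < (alphaK ω k : ℤ) * ω k) :
    sg n (Ghat n ω θ β k) = -(Fp n ω θ β k) := by
  have hepos : ((alphaK ω k : ℤ) * ω k - ω (k + 1)).toNat ≠ 0 := by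
    rw [Ne, Int.toNat_eq_zero]
    omega
  rw [Ghat_eq, map_sub, map_mul, map_pow, sg_X0, zero_pow hepos, zero_mul, zero_sub,
    sg_F n ω θ β hk1 (by omega)]

lemma nzd (n : ℕ) (ω : ℕ → ℤ) (θ : ℕ → ℂ) (β : ℕ → ℕ → ℤ) (hω0 : 1 ≤ ω 0)
    {t : ℕ} (ht : t + 1 ≤ n) (g : MvPolynomial (Fin (n + 2)) ℂ)
    (hg : g * Fp n ω θ β (t + 1) ∈ Ideal.span (Fp n ω θ β '' Set.Icc 1 t)) :
    g ∈ Ideal.span (Fp n ω θ β '' Set.Icc 1 t) := by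
  classical
  set v : Fin (n + 2) := (((t + 1 : ℕ)) : Fin (n + 2)) with hv
  set S := MvPolynomial {b : Fin (n + 2) // b ≠ v} ℂ with hS
  let e : Fin (n + 2) ≃ Option {b : Fin (n + 2) // b ≠ v} := (Equiv.optionSubtypeNe v).symm
  let Φ : MvPolynomial (Fin (n + 2)) ℂ ≃ₐ[ℂ] Polynomial S :=
    (renameEquiv ℂ e).trans (optionEquivLeft ℂ {b : Fin (n + 2) // b ≠ v})
  have hΦv : Φ (X v) = Polynomial.X := by
    show (optionEquivLeft ℂ _) (rename e (X v)) = Polynomial.X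
    rw [rename_X]
    have h1 : e v = none := Equiv.optionSubtypeNe_symm_self v
    rw [h1, optionEquivLeft_X_none]
  have hΦn : ∀ (i : Fin (n + 2)) (h : i ≠ v), Φ (X i) = Polynomial.C (X ⟨i, h⟩) := by
    intro i h
    show (optionEquivLeft ℂ _) (rename e (X i)) = _
    rw [rename_X]
    have h1 : e i = some ⟨i, h⟩ := Equiv.optionSubtypeNe_symm_of_ne h
    rw [h1, optionEquivLeft_X_some]
  have hΦC : ∀ a : ℂ, Φ (C a) = Polynomial.C (C a) := by
    intro a
    show (optionEquivLeft ℂ _) (rename e (C a)) = _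
    rw [rename_C, optionEquivLeft_C]
  have hXmem : ∀ j : ℕ, 1 ≤ j → j ≤ t →
      Φ (X ((j : ℕ) : Fin (n + 2))) ∈ (Polynomial.C : S →+* Polynomial S).range := by
    intro j hj1 hj2
    have hne : ((j : ℕ) : Fin (n + 2)) ≠ v := by
      rw [hv]
      exact finCast_ne (by omega) (by omega) (by omega)
    rw [hΦn _ hne]
    exact ⟨_, rfl⟩
  have hFmem : ∀ k, 1 ≤ k → k ≤ t →
      Φ (Fp n ω θ β k) ∈ (Polynomial.C : S →+* Polynomial S).range := by
    intro k hk1 hk2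
    rw [Fp, map_sub, map_pow, map_mul, hΦC, map_prod]
    refine Subring.sub_mem _ (Subring.pow_mem _ (hXmem k hk1 hk2) _)
      (Subring.mul_mem _ ⟨_, rfl⟩ (Subring.prod_mem _ ?_))
    intro j hj
    simp only [Finset.mem_Ico] at hj
    rw [map_pow]
    exact Subring.pow_mem _ (hXmem j hj.1 (by omega)) _
  have hT : Φ (C (θ (t + 1)) *
      ∏ j ∈ Finset.Ico 1 (t + 1), X ((j : ℕ) : Fin (n + 2)) ^ (β (t + 1) j).toNat) ∈
      (Polynomial.C : S →+* Polynomial S).range := by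
    rw [map_mul, hΦC, map_prod]
    refine Subring.mul_mem _ ⟨_, rfl⟩ (Subring.prod_mem _ ?_)
    intro j hj
    simp only [Finset.mem_Ico] at hj
    rw [map_pow]
    exact Subring.pow_mem _ (hXmem j hj.1 (by omega)) _
  obtain ⟨c₀, hc₀⟩ := hT
  have hΦF : Φ (Fp n ω θ β (t + 1)) =
      Polynomial.X ^ alphaK ω (t + 1) - Polynomial.C c₀ := by
    rw [Fp, map_sub, map_pow, ← hv, hΦv, ← hc₀]
  set J : Ideal (MvPolynomial (Fin (n + 2)) ℂ) :=
    Ideal.span (Fp n ω θ β '' Set.Icc 1 t) with hJ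
  let φ : MvPolynomial (Fin (n + 2)) ℂ →+* Polynomial S := Φ.toAlgHom.toRingHom
  have hcoe : ⇑φ = ⇑Φ := rfl
  set cset : Set S := {c | Polynomial.C c ∈ ⇑Φ '' (Fp n ω θ β '' Set.Icc 1 t)} with hcset
  set I' : Ideal S := Ideal.span cset with hI'
  have hsets : ⇑Φ '' (Fp n ω θ β '' Set.Icc 1 t) = Polynomial.C '' cset := by
    ext y
    constructor
    · rintro ⟨x, ⟨k, hk, rfl⟩, rfl⟩
      simp only [Set.mem_Icc] at hk
      obtain ⟨c, hc⟩ := hFmem k hk.1 hk.2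
      refine ⟨c, ?_, hc⟩
      have h1 : Polynomial.C c ∈ ⇑Φ '' (Fp n ω θ β '' Set.Icc 1 t) := by
        rw [hc]
        exact ⟨Fp n ω θ β k, ⟨k, Set.mem_Icc.mpr hk, rfl⟩, rfl⟩
      exact h1
    · rintro ⟨c, hc, rfl⟩
      exact hc
  have hmap : Ideal.map φ J = Ideal.map (Polynomial.C : S →+* Polynomial S) I' := by
    rw [hJ, hI', Ideal.map_span, Ideal.map_span, hcoe, hsets]
  set π := Ideal.Quotient.mk I' with hπ
  have hker : Ideal.map (Polynomial.C : S →+* Polynomial S) I' =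
      RingHom.ker (Polynomial.mapRingHom π) := by
    rw [Polynomial.ker_mapRingHom, Ideal.mk_ker]
  have h1 : Φ g * Φ (Fp n ω θ β (t + 1)) ∈ Ideal.map φ J := by
    rw [← map_mul]
    exact Ideal.mem_map_of_mem φ hg
  have h2 : Polynomial.mapRingHom π (Φ g * Φ (Fp n ω θ β (t + 1))) = 0 := by
    rw [← RingHom.mem_ker, ← hker, ← hmap]
    exact h1
  have h3 : Polynomial.map π (Φ g) *
      (Polynomial.X ^ alphaK ω (t + 1) - Polynomial.C (π c₀)) = 0 := by
    rw [Polynomial.coe_mapRingHom] at h2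
    rw [hΦF] at h2
    rw [Polynomial.map_mul, Polynomial.map_sub, Polynomial.map_pow, Polynomial.map_X,
      Polynomial.map_C] at h2
    exact h2
  have hmono : (Polynomial.X ^ alphaK ω (t + 1) - Polynomial.C (π c₀)).Monic :=
    Polynomial.monic_X_pow_sub_C _ (alpha_pos hω0 (t + 1)).ne'
  have h4 : Polynomial.map π (Φ g) = 0 := (hmono.mul_left_eq_zero_iff).mp h3
  have h5 : Φ g ∈ Ideal.map φ J := by
    rw [hmap, hker, RingHom.mem_ker, Polynomial.coe_mapRingHom]
    exact h4
  obtain ⟨x, hxJ, hx⟩ := (Ideal.mem_map_iff_of_surjective φ Φ.surjective).mp h5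
  have hxg : x = g := Φ.injective hx
  rwa [← hxg]

lemma main_step (n : ℕ) (ω : ℕ → ℤ) (θ : ℕ → ℂ) (β : ℕ → ℕ → ℤ)
    (hω0 : 1 ≤ ω 0)
    (hlt : ∀ k, 1 ≤ k → k ≤ n → ω (k + 1) < (alphaK ω k : ℤ) * ω k) :
    ∀ t, t ≤ n → ∀ g : MvPolynomial (Fin (n + 2)) ℂ,
      X 0 * g ∈ Ideal.span (Ghat n ω θ β '' Set.Icc 1 t) →
      g ∈ Ideal.span (Ghat n ω θ β '' Set.Icc 1 t) := by
  intro t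
  induction t with
  | zero =>
    intro _ g hg
    rw [Set.Icc_eq_empty (by norm_num), Set.image_empty, Ideal.span_empty, Ideal.mem_bot]
      at hg ⊢
    rcases mul_eq_zero.mp hg with h | h
    · exact absurd h (X_ne_zero 0)
    · exact h
  | succ t ih =>
    intro ht g hg
    have hicc : Set.Icc 1 (t + 1) = insert (t + 1) (Set.Icc (1 : ℕ) t) := by
      ext x
      simp only [Set.mem_Icc, Set.mem_insert_iff]
      omega
    have hspan : Ideal.span (Ghat n ω θ β '' Set.Icc 1 (t + 1)) =
        Ideal.span {Ghat n ω θ β (t + 1)} ⊔ Ideal.span (Ghat n ω θ β '' Set.Icc 1 t) := by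
      rw [hicc, Set.image_insert_eq, Ideal.span_insert]
    rw [hspan] at hg
    obtain ⟨z, hz, h, hh, hzh⟩ := Submodule.mem_sup.mp hg
    obtain ⟨q, hq⟩ := Ideal.mem_span_singleton'.mp hz
    -- apply the substitution ŵ := 0
    have hsg0 : sg n q * -(Fp n ω θ β (t + 1)) + sg n h = 0 := by
      have e1 := congrArg (sg n) hzh
      rw [map_add, map_mul, sg_X0, zero_mul, ← hq, map_mul,
        sg_G n ω θ β (by omega) ht (hlt (t + 1) (by omega) ht)] at e1
      exact e1
    have he1 : sg n q * Fp n ω θ β (t + 1) = sg n h := by linear_combination -hsg0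
    -- sg h lies in the ideal generated by the F's
    have hsgh : sg n h ∈ Ideal.span (Fp n ω θ β '' Set.Icc 1 t) := by
      have hmem : sg n h ∈ Ideal.map (sg n).toRingHom
          (Ideal.span (Ghat n ω θ β '' Set.Icc 1 t)) :=
        Ideal.mem_map_of_mem _ hh
      refine Ideal.map_le_iff_le_comap.mpr ?_ hmem
      rw [Ideal.span_le]
      rintro _ ⟨k, hk, rfl⟩
      simp only [Set.mem_Icc] at hk
      rw [SetLike.mem_coe, Ideal.mem_comap]
      show sg n (Ghat n ω θ β k) ∈ _
      rw [sg_G n ω θ β hk.1 (by omega) (hlt k hk.1 (by omega))]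
      exact Submodule.neg_mem _ (Ideal.subset_span ⟨k, Set.mem_Icc.mpr hk, rfl⟩)
    have hsgq : sg n q ∈ Ideal.span (Fp n ω θ β '' Set.Icc 1 t) :=
      nzd n ω θ β hω0 ht (sg n q) (he1 ▸ hsgh)
    -- the F-ideal is contained in the G-ideal plus (ŵ)
    have hJF : Ideal.span (Fp n ω θ β '' Set.Icc 1 t) ≤
        Ideal.span (Ghat n ω θ β '' Set.Icc 1 t) ⊔ Ideal.span {(X 0 : MvPolynomial (Fin (n + 2)) ℂ)} := by
      rw [Ideal.span_le]
      rintro _ ⟨k, hk, rfl⟩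
      simp only [Set.mem_Icc] at hk
      have he : ((alphaK ω k : ℤ) * ω k - ω (k + 1)).toNat ≠ 0 := by
        have := hlt k hk.1 (by omega)
        rw [Ne, Int.toNat_eq_zero]
        omega
      have hFG : Fp n ω θ β k =
          MvPolynomial.X (0 : Fin (n + 2)) ^ (((alphaK ω k : ℤ) * ω k - ω (k + 1)).toNat) *
            MvPolynomial.X ((k + 1 : ℕ) : Fin (n + 2)) - Ghat n ω θ β k := by
        rw [Ghat_eq]
        ring
      rw [SetLike.mem_coe, hFG]
      apply Submodule.sub_mem
      · apply Ideal.mem_sup_right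
        rw [Ideal.mem_span_singleton]
        exact Dvd.dvd.mul_right (dvd_pow_self (X 0) he) _
      · exact Ideal.mem_sup_left (Ideal.subset_span ⟨k, Set.mem_Icc.mpr hk, rfl⟩)
    obtain ⟨h', hh', w, hw', hq'⟩ := Submodule.mem_sup.mp (hJF hsgq)
    obtain ⟨r, hw⟩ := Ideal.mem_span_singleton'.mp hw'
    obtain ⟨s, hs⟩ := X0_dvd_sub_sg n q
    -- the key identity
    have heq : X 0 * (g - (r + s) * Ghat n ω θ β (t + 1)) =
        h + h' * Ghat n ω θ β (t + 1) := by
      linear_combination -hzh - hq + Ghat n ω θ β (t + 1) * hs -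
        Ghat n ω θ β (t + 1) * hq' - Ghat n ω θ β (t + 1) * hw
    have hmem2 : h + h' * Ghat n ω θ β (t + 1) ∈
        Ideal.span (Ghat n ω θ β '' Set.Icc 1 t) :=
      Submodule.add_mem _ hh (Ideal.mul_mem_right _ _ hh')
    have hin := ih (by omega) _ (heq ▸ hmem2)
    have hg' : g = (g - (r + s) * Ghat n ω θ β (t + 1)) + (r + s) * Ghat n ω θ β (t + 1) := by
      ring
    rw [hspan, hg']
    exact Submodule.add_mem _ (Ideal.mem_sup_right hin)
      (Ideal.mem_sup_left (Ideal.mem_span_singleton'.mpr ⟨r + s, rfl⟩))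

end Stmt6Aux

/-- For a primitive algebraic key sequence, the image of `ŵ` in `Â/Î` is a
nonzerodivisor: if `ŵ^N·gg ∈ Î` then `gg ∈ Î`. -/
theorem stmt6 (n : ℕ) (ω : ℕ → ℤ) (θ : ℕ → ℂ) (β : ℕ → ℕ → ℤ)
    (hω : IsKeySequence n ω) (hprim : IsPrimitive n ω) (halg : IsAlgebraicKeySeq n ω)
    (hθ : ∀ k, 1 ≤ k → k ≤ n → θ k ≠ 0) (hβ : IsRepTuple n ω β) :
    ∀ (gg : MvPolynomial (Fin (n + 2)) ℂ) (N : ℕ),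
      MvPolynomial.X (0 : Fin (n + 2)) ^ N * gg ∈ Ihat n ω θ β → gg ∈ Ihat n ω θ β := by
  intro gg N
  induction N generalizing gg with
  | zero =>
    intro h
    simpa using h
  | succ N ih =>
    intro h
    have h2 : MvPolynomial.X (0 : Fin (n + 2)) ^ N *
        (MvPolynomial.X (0 : Fin (n + 2)) * gg) ∈ Ihat n ω θ β := by
      have e1 : MvPolynomial.X (0 : Fin (n + 2)) ^ N *
          (MvPolynomial.X (0 : Fin (n + 2)) * gg) =
          MvPolynomial.X (0 : Fin (n + 2)) ^ (N + 1) * gg := by ring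
      rw [e1]
      exact h
    have h3 := ih _ h2
    exact Stmt6Aux.main_step n ω θ β hω.1 hω.2.2 n le_rfl gg h3
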